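/- Let c ≥ 2 be an integer and let α : ℕ → ℕ be a function with α(n)/n → 0 as n → ∞. Then there exists N such that for every n ≥ N and every finite simple undirected graph G on a vertex set V of size n in which every vertex has degree at least n/c − 1, the following all hold: (i) every equivalence class of ~_{α(n)} has size at least n/c; (ii) ~_{α(n)} has at most c equivalence classes; (iii) for any two distinct equivalence classes U ≠ U', |edges_G(U, U')| ≤ α(n); and (iv) the number of α(n)-cuts of G is at most 2^(c−1). In particular, the equivalence classes of ~_{α(n)} form an (α(n), n/c)-partition of G of size at most c. -/

import Mathlib

open Finset

/-- Number of edges of `G` with one endpoint in `S` and the other in `T`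
(for disjoint `S`, `T`, each such edge is counted exactly once as an ordered pair). -/
def crossEdges {V : Type*} [Fintype V] [DecidableEq V] (G : SimpleGraph V)
    [DecidableRel G.Adj] (S T : Finset V) : ℕ :=
  ((S ×ˢ T).filter fun p => G.Adj p.1 p.2).card

/-- Number of edges of `G` with exactly one endpoint in `S`. -/
def cutEdges {V : Type*} [Fintype V] [DecidableEq V] (G : SimpleGraph V)
    [DecidableRel G.Adj] (S : Finset V) : ℕ :=
  crossEdges G S Sᶜ

/-- The equivalence relation `~_α`: `u ~_α v` iff for every `S` with `|edges_G(S)| ≤ α`,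
`u ∈ S ↔ v ∈ S`. -/
def cutRel {V : Type*} [Fintype V] [DecidableEq V] (G : SimpleGraph V)
    [DecidableRel G.Adj] (α : ℕ) (u v : V) : Prop :=
  ∀ S : Finset V, cutEdges G S ≤ α → (u ∈ S ↔ v ∈ S)

instance {V : Type*} [Fintype V] [DecidableEq V] (G : SimpleGraph V)
    [DecidableRel G.Adj] (α : ℕ) (u v : V) : Decidable (cutRel G α u v) :=
  inferInstanceAs (Decidable (∀ S : Finset V, cutEdges G S ≤ α → (u ∈ S ↔ v ∈ S)))

/-- The `~_α`-equivalence class of a vertex `v`. -/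
def cutClass {V : Type*} [Fintype V] [DecidableEq V] (G : SimpleGraph V)
    [DecidableRel G.Adj] (α : ℕ) (v : V) : Finset V :=
  Finset.univ.filter fun u => cutRel G α u v

/-- The set of all `~_α`-equivalence classes. -/
def cutClasses {V : Type*} [Fintype V] [DecidableEq V] (G : SimpleGraph V)
    [DecidableRel G.Adj] (α : ℕ) : Finset (Finset V) :=
  Finset.univ.image (cutClass G α)

variable {V : Type*} [Fintype V] [DecidableEq V] (G : SimpleGraph V) [DecidableRel G.Adj]

lemma crossEdges_eq_sum (S T : Finset V) :
    crossEdges G S T = ∑ a ∈ S, (T.filter (G.Adj a)).card := by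
  unfold crossEdges
  rw [Finset.card_filter, Finset.sum_product]
  congr 1; ext a; rw [Finset.card_filter]

lemma crossEdges_mono {S S' T T' : Finset V} (hS : S ⊆ S') (hT : T ⊆ T') :
    crossEdges G S T ≤ crossEdges G S' T' :=
  Finset.card_le_card (Finset.filter_subset_filter _ (Finset.product_subset_product hS hT))

lemma crossEdges_comm (S T : Finset V) : crossEdges G S T = crossEdges G T S := by
  unfold crossEdges
  apply Finset.card_bij' (fun p _ => Prod.swap p) (fun p _ => Prod.swap p) <;>
    simp +contextual [Finset.mem_filter, G.adj_comm]

lemma cutEdges_compl (S : Finset V) : cutEdges G Sᶜ = cutEdges G S := by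
  unfold cutEdges
  rw [compl_compl, crossEdges_comm]

-- degree sum bound
lemma sum_degree_le (S : Finset V) :
    ∑ v ∈ S, (G.degree v + 1) ≤ S.card * S.card + cutEdges G S := by
  have hdeg : ∀ v ∈ S, G.degree v + 1 ≤ (S.filter (G.Adj v)).card + 1 + (Sᶜ.filter (G.Adj v)).card := by
    intro v hv
    have : G.degree v = (S.filter (G.Adj v)).card + (Sᶜ.filter (G.Adj v)).card := by
      rw [← SimpleGraph.card_neighborFinset_eq_degree, SimpleGraph.neighborFinset_eq_filter]
      rw [← Finset.card_union_of_disjoint (Finset.disjoint_filter_filter disjoint_compl_right),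
        ← Finset.filter_union, Finset.union_compl]
    omega
  calc ∑ v ∈ S, (G.degree v + 1)
      ≤ ∑ v ∈ S, ((S.filter (G.Adj v)).card + 1 + (Sᶜ.filter (G.Adj v)).card) :=
        Finset.sum_le_sum hdeg
    _ = ∑ v ∈ S, ((S.filter (G.Adj v)).card + 1) + ∑ v ∈ S, (Sᶜ.filter (G.Adj v)).card := by
        rw [← Finset.sum_add_distrib]
    _ ≤ S.card * S.card + cutEdges G S := by
        rw [cutEdges, crossEdges_eq_sum]
        have h1 : ∑ v ∈ S, ((S.filter (G.Adj v)).card + 1) ≤ S.card * S.card := by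
          rw [← Finset.sum_const_nat (m := S.card) (fun _ _ => rfl)]
          apply Finset.sum_le_sum
          intro v hv
          have hsub : S.filter (G.Adj v) ⊆ S.erase v := by
            intro u hu
            rw [Finset.mem_filter] at hu
            exact Finset.mem_erase.2 ⟨fun h => G.irrefl (h ▸ hu.2), hu.1⟩
          have := Finset.card_le_card hsub
          have := Finset.card_erase_add_one hv
          omega
        omega

lemma size_lemma {c n β : ℕ} (hcard : Fintype.card V = n)
    (hdeg : ∀ v, n ≤ c * (G.degree v + 1)) {S : Finset V} (hS : S.Nonempty)
    (hcut : cutEdges G S ≤ β) (hn : c * (c + 1) * β < n) : n ≤ c * S.card := by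
  by_contra hcon
  push_neg at hcon
  set s := S.card with hs
  have hs1 : 1 ≤ s := Finset.card_pos.2 hS
  have h1 : s * n ≤ c * (s * s) + c * β := by
    calc s * n = ∑ _v ∈ S, n := by rw [Finset.sum_const, smul_eq_mul]
      _ ≤ ∑ v ∈ S, c * (G.degree v + 1) := Finset.sum_le_sum fun v _ => hdeg v
      _ = c * ∑ v ∈ S, (G.degree v + 1) := by rw [Finset.mul_sum]
      _ ≤ c * (s * s + cutEdges G S) := by
          exact Nat.mul_le_mul_left c (sum_degree_le G S)
      _ ≤ c * (s * s) + c * β := by rw [mul_add]; exact Nat.add_le_add_left (Nat.mul_le_mul_left c hcut) _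
  have h2 : s ≤ c * β := by
    have hA : c * s * s ≤ (n - 1) * s := Nat.mul_le_mul_right s (by omega)
    have hC : s * n ≤ n * s - s + c * β := by
      calc s * n ≤ c * (s * s) + c * β := h1
        _ = c * s * s + c * β := by ring
        _ ≤ (n - 1) * s + c * β := by omega
        _ = n * s - s + c * β := by rw [Nat.sub_mul, one_mul]
    have hD : s * n = n * s := mul_comm _ _
    have hE : s ≤ n * s := Nat.le_mul_of_pos_left s (by omega)
    set x := n * s
    set y := c * β
    omega
  have h3 : n ≤ c * s + c * β := by
    have hM : s * n ≤ s * (c * s + c * β) := by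
      calc s * n ≤ c * (s * s) + c * β := h1
        _ ≤ s * (c * s) + s * (c * β) := by
            have : c * (s * s) = s * (c * s) := by ring
            have h := Nat.le_mul_of_pos_left (c * β) (show 0 < s by omega)
            omega
        _ = s * (c * s + c * β) := (mul_add _ _ _).symm
    exact Nat.le_of_mul_le_mul_left hM (by omega)
  have h4 : c * s ≤ c * (c * β) := Nat.mul_le_mul_left c h2
  have h5 : c * (c * β) + c * β = c * (c + 1) * β := by ring
  omega

/-- Classes of the relation "agree on every member of `ℱ`". -/
def classF (ℱ : Finset (Finset V)) (v : V) : Finset V :=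
  Finset.univ.filter fun u => ∀ S ∈ ℱ, (u ∈ S ↔ v ∈ S)

def classesF (ℱ : Finset (Finset V)) : Finset (Finset V) :=
  Finset.univ.image (classF ℱ)

lemma mem_classF {ℱ : Finset (Finset V)} {u v : V} :
    u ∈ classF ℱ v ↔ ∀ S ∈ ℱ, (u ∈ S ↔ v ∈ S) := by
  simp [classF]

lemma self_mem_classF {ℱ : Finset (Finset V)} (v : V) : v ∈ classF ℱ v :=
  mem_classF.2 fun _ _ => Iff.rfl

lemma classF_eq_of_mem {ℱ : Finset (Finset V)} {u v : V} (h : u ∈ classF ℱ v) :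
    classF ℱ u = classF ℱ v := by
  rw [mem_classF] at h
  ext w
  rw [mem_classF, mem_classF]
  exact ⟨fun hw S hS => (hw S hS).trans (h S hS), fun hw S hS => (hw S hS).trans (h S hS).symm⟩

lemma classF_mem_classesF (ℱ : Finset (Finset V)) (v : V) : classF ℱ v ∈ classesF ℱ :=
  Finset.mem_image_of_mem _ (Finset.mem_univ v)

lemma classesF_disjoint {ℱ : Finset (Finset V)} {A B : Finset V}
    (hA : A ∈ classesF ℱ) (hB : B ∈ classesF ℱ) (hAB : A ≠ B) : Disjoint A B := by
  obtain ⟨a, -, rfl⟩ := Finset.mem_image.1 hA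
  obtain ⟨b, -, rfl⟩ := Finset.mem_image.1 hB
  rw [Finset.disjoint_left]
  intro w hwa hwb
  exact hAB ((classF_eq_of_mem hwa).symm.trans (classF_eq_of_mem hwb))

lemma classesF_nonempty {ℱ : Finset (Finset V)} {A : Finset V} (hA : A ∈ classesF ℱ) :
    A.Nonempty := by
  obtain ⟨a, -, rfl⟩ := Finset.mem_image.1 hA
  exact ⟨a, self_mem_classF a⟩

lemma crossEdges_classes_le {a : ℕ} {ℱ : Finset (Finset V)}
    (hF : ∀ S ∈ ℱ, cutEdges G S ≤ a) {A B : Finset V}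
    (hA : A ∈ classesF ℱ) (hB : B ∈ classesF ℱ) (hAB : A ≠ B) :
    crossEdges G A B ≤ a := by
  obtain ⟨u, -, rfl⟩ := Finset.mem_image.1 hA
  obtain ⟨v, -, rfl⟩ := Finset.mem_image.1 hB
  have hne : ¬ (∀ S ∈ ℱ, (u ∈ S ↔ v ∈ S)) := fun h => hAB (classF_eq_of_mem (mem_classF.2 h))
  push_neg at hne
  obtain ⟨S, hSF, hS⟩ := hne
  have hcut := hF S hSF
  rcases hS with ⟨hu, hv⟩ | ⟨hu, hv⟩
  · have h1 : classF ℱ u ⊆ S := fun w hw => ((mem_classF.1 hw) S hSF).2 hu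
    have h2 : classF ℱ v ⊆ Sᶜ := fun w hw =>
      Finset.mem_compl.2 fun hwS => hv (((mem_classF.1 hw) S hSF).1 hwS)
    exact le_trans (crossEdges_mono G h1 h2) hcut
  · have h1 : classF ℱ u ⊆ Sᶜ := fun w hw =>
      Finset.mem_compl.2 fun hwS => hu (((mem_classF.1 hw) S hSF).1 hwS)
    have h2 : classF ℱ v ⊆ S := fun w hw => ((mem_classF.1 hw) S hSF).2 hv
    calc crossEdges G (classF ℱ u) (classF ℱ v) ≤ crossEdges G Sᶜ S := crossEdges_mono G h1 h2
      _ = cutEdges G Sᶜ := by rw [cutEdges, compl_compl]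
      _ = cutEdges G S := cutEdges_compl G S
      _ ≤ a := hcut

lemma cutEdges_class_le {a : ℕ} {ℱ : Finset (Finset V)}
    (hF : ∀ S ∈ ℱ, cutEdges G S ≤ a) {A : Finset V} (hA : A ∈ classesF ℱ) :
    cutEdges G A ≤ ((classesF ℱ).card - 1) * a := by
  have hcover : Aᶜ ⊆ ((classesF ℱ).erase A).biUnion id := by
    intro u hu
    rw [Finset.mem_biUnion]
    refine ⟨classF ℱ u, Finset.mem_erase.2 ⟨?_, classF_mem_classesF ℱ u⟩, self_mem_classF u⟩
    intro h
    exact (Finset.mem_compl.1 hu) (h ▸ self_mem_classF u)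
  calc cutEdges G A = crossEdges G A Aᶜ := rfl
    _ ≤ crossEdges G A (((classesF ℱ).erase A).biUnion id) :=
        crossEdges_mono G (le_refl A) hcover
    _ ≤ ∑ B ∈ (classesF ℱ).erase A, crossEdges G A B := by
        rw [crossEdges_eq_sum]
        have : ∀ x ∈ A, ((((classesF ℱ).erase A).biUnion id).filter (G.Adj x)).card
            ≤ ∑ B ∈ (classesF ℱ).erase A, (B.filter (G.Adj x)).card := by
          intro x hx
          rw [Finset.filter_biUnion]
          exact Finset.card_biUnion_le
        calc ∑ x ∈ A, ((((classesF ℱ).erase A).biUnion id).filter (G.Adj x)).card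
            ≤ ∑ x ∈ A, ∑ B ∈ (classesF ℱ).erase A, (B.filter (G.Adj x)).card :=
              Finset.sum_le_sum this
          _ = ∑ B ∈ (classesF ℱ).erase A, ∑ x ∈ A, (B.filter (G.Adj x)).card :=
              Finset.sum_comm
          _ = ∑ B ∈ (classesF ℱ).erase A, crossEdges G A B := by
              simp_rw [crossEdges_eq_sum]
    _ ≤ ∑ _B ∈ (classesF ℱ).erase A, a := Finset.sum_le_sum fun B hB => by
        have hB' := Finset.mem_erase.1 hB
        exact crossEdges_classes_le G hF hA hB'.2 (fun h => hB'.1 h.symm)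
    _ = ((classesF ℱ).erase A).card * a := by rw [Finset.sum_const, smul_eq_mul]
    _ = ((classesF ℱ).card - 1) * a := by rw [Finset.card_erase_of_mem hA]

lemma classF_insert (T : Finset V) (ℱ : Finset (Finset V)) (v : V) :
    classF (insert T ℱ) v = if v ∈ T then classF ℱ v ∩ T else classF ℱ v ∩ Tᶜ := by
  ext u
  have hiff : (∀ S ∈ insert T ℱ, (u ∈ S ↔ v ∈ S)) ↔
      ((u ∈ T ↔ v ∈ T) ∧ ∀ S ∈ ℱ, (u ∈ S ↔ v ∈ S)) :=
    Finset.forall_mem_insert _ _ _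
  by_cases hv : v ∈ T <;> simp only [hv, if_true, if_false, mem_classF, hiff,
    Finset.mem_inter, Finset.mem_compl] <;> tauto

lemma card_classesF_insert (T : Finset V) (ℱ : Finset (Finset V)) :
    (classesF (insert T ℱ)).card ≤ 2 * (classesF ℱ).card := by
  have hsub : classesF (insert T ℱ) ⊆
      (classesF ℱ).image (· ∩ T) ∪ (classesF ℱ).image (· ∩ Tᶜ) := by
    intro A hA
    obtain ⟨v, -, rfl⟩ := Finset.mem_image.1 hA
    rw [classF_insert]
    by_cases hv : v ∈ T
    · simp only [hv, if_true]
      exact Finset.mem_union_left _ (Finset.mem_image_of_mem _ (classF_mem_classesF ℱ v))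
    · simp only [hv, if_false]
      exact Finset.mem_union_right _ (Finset.mem_image_of_mem _ (classF_mem_classesF ℱ v))
  calc (classesF (insert T ℱ)).card
      ≤ ((classesF ℱ).image (· ∩ T) ∪ (classesF ℱ).image (· ∩ Tᶜ)).card :=
        Finset.card_le_card hsub
    _ ≤ ((classesF ℱ).image (· ∩ T)).card + ((classesF ℱ).image (· ∩ Tᶜ)).card :=
        Finset.card_union_le _ _
    _ ≤ (classesF ℱ).card + (classesF ℱ).card :=
        add_le_add (Finset.card_image_le) (Finset.card_image_le)
    _ = 2 * (classesF ℱ).card := by ring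

lemma sum_card_classesF (ℱ : Finset (Finset V)) :
    ∑ A ∈ classesF ℱ, A.card = Fintype.card V := by
  rw [← Finset.card_biUnion]
  · congr 1
    apply Finset.eq_univ_of_forall
    intro v
    exact Finset.mem_biUnion.2 ⟨classF ℱ v, classF_mem_classesF ℱ v, self_mem_classF v⟩
  · intro A hA B hB hAB
    exact classesF_disjoint hA hB hAB

lemma key {c n a : ℕ} (hc : 2 ≤ c) (hcard : Fintype.card V = n)
    (hdeg : ∀ v, n ≤ c * (G.degree v + 1))
    (hn : c * (c + 1) * ((2 * c - 1) * a) < n)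
    (ℱ : Finset (Finset V)) (hF : ∀ S ∈ ℱ, cutEdges G S ≤ a) :
    (classesF ℱ).card ≤ c ∧ ∀ A ∈ classesF ℱ, n ≤ c * A.card := by
  have hn0 : 0 < n := by omega
  induction ℱ using Finset.induction_on with
  | empty =>
      have huniv : ∀ v : V, classF (∅ : Finset (Finset V)) v = Finset.univ := by
        intro v
        apply Finset.eq_univ_of_forall
        intro u
        exact mem_classF.2 fun S hS => absurd hS (Finset.notMem_empty S)
      constructor
      · have hsub : classesF (∅ : Finset (Finset V)) ⊆ {Finset.univ} := by
          intro A hA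
          obtain ⟨v, -, rfl⟩ := Finset.mem_image.1 hA
          rw [huniv v]
          exact Finset.mem_singleton_self _
        exact le_trans (Finset.card_le_card hsub) (by simpa using hc.trans' (by norm_num))
      · intro A hA
        obtain ⟨v, -, rfl⟩ := Finset.mem_image.1 hA
        rw [huniv v, Finset.card_univ, hcard]
        exact Nat.le_mul_of_pos_left n (by omega)
  | @insert T ℱ hT ih =>
      have hF' : ∀ S ∈ ℱ, cutEdges G S ≤ a := fun S hS => hF S (Finset.mem_insert_of_mem hS)
      have hFi : ∀ S ∈ insert T ℱ, cutEdges G S ≤ a := hF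
      obtain ⟨ih1, -⟩ := ih hF'
      have hsize : ∀ A ∈ classesF (insert T ℱ), n ≤ c * A.card := by
        intro A hA
        have hcut := cutEdges_class_le G hFi hA
        have hcard2 : (classesF (insert T ℱ)).card ≤ 2 * c :=
          le_trans (card_classesF_insert T ℱ) (by omega)
        have hβ : cutEdges G A ≤ (2 * c - 1) * a :=
          le_trans hcut (Nat.mul_le_mul_right a (by omega))
        exact size_lemma G hcard hdeg (classesF_nonempty hA) hβ hn
      refine ⟨?_, hsize⟩
      have hk : (classesF (insert T ℱ)).card * n ≤ c * n := by
        calc (classesF (insert T ℱ)).card * n = ∑ _A ∈ classesF (insert T ℱ), n := by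
              rw [Finset.sum_const, smul_eq_mul]
          _ ≤ ∑ A ∈ classesF (insert T ℱ), c * A.card :=
              Finset.sum_le_sum fun A hA => hsize A hA
          _ = c * ∑ A ∈ classesF (insert T ℱ), A.card := by rw [Finset.mul_sum]
          _ = c * n := by rw [sum_card_classesF, hcard]
      exact Nat.le_of_mul_le_mul_right hk hn0

lemma cutClasses_eq (a : ℕ) :
    cutClasses G a = classesF (Finset.univ.filter fun S : Finset V => cutEdges G S ≤ a) := by
  apply Finset.image_congr
  intro v _
  ext u
  simp only [cutClass, classF, Finset.mem_filter, Finset.mem_univ, true_and]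
  simp [cutRel]

/-- for `c ≥ 2` and a sublinear `α : ℕ → ℕ` (i.e. `α(n)/n → 0`), for all
sufficiently large `n` and every graph `G` on `n` vertices of minimum degree at least
`n/c − 1`: (i) every `~_{α n}`-class has size at least `n/c`; (ii) there are at most `c`
classes; (iii) distinct classes have at most `α n` crossing edges; (iv) the number of
`α(n)`-cuts of `G` is at most `2^(c−1)`. -/
theorem stmt6 (c : ℕ) (hc : 2 ≤ c) (α : ℕ → ℕ)
    (hα : Filter.Tendsto (fun n => (α n : ℝ) / (n : ℝ)) Filter.atTop (nhds 0)) :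
    ∃ N : ℕ, ∀ n ≥ N, ∀ (V : Type) [Fintype V] [DecidableEq V],
      ∀ (G : SimpleGraph V) [DecidableRel G.Adj],
      Fintype.card V = n →
      (∀ v : V, n ≤ c * (G.degree v + 1)) →
      ((∀ U ∈ cutClasses G (α n), n ≤ c * U.card) ∧
       (cutClasses G (α n)).card ≤ c ∧
       (∀ U ∈ cutClasses G (α n), ∀ U' ∈ cutClasses G (α n), U ≠ U' →
          crossEdges G U U' ≤ α n) ∧
       ((Finset.univ.filter fun S : Finset V =>
            S ≠ ∅ ∧ S ≠ Finset.univ ∧ cutEdges G S ≤ α n).image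
              fun S => ({S, Sᶜ} : Finset (Finset V))).card ≤ 2 ^ (c - 1)) := by
  have hpos : (0 : ℝ) < 1 / (8 * (c : ℝ) ^ 3 + 1) := by positivity
  obtain ⟨N₀, hN₀⟩ := Filter.eventually_atTop.1 (hα.eventually_lt_const hpos)
  refine ⟨max N₀ 1, fun n hn V _ _ G _ hcard hdeg => ?_⟩
  -- a key numeric inequality
  set a := α n with ha
  have hn1 : 1 ≤ n := le_trans (le_max_right _ _) hn
  have h8 : (8 * c ^ 3 + 1) * a < n := by
    have h := hN₀ n (le_trans (le_max_left _ _) hn)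
    have hnR : (0 : ℝ) < n := by exact_mod_cast hn1
    rw [div_lt_div_iff₀ hnR (by positivity)] at h
    have : ((8 * c ^ 3 + 1) * a : ℝ) < n := by push_cast at h ⊢; nlinarith
    exact_mod_cast this
  have hnum : c * (c + 1) * ((2 * c - 1) * a) < n := by
    have h1 : c * (c + 1) * ((2 * c - 1) * a) ≤ (8 * c ^ 3 + 1) * a := by
      have : c * (c + 1) * (2 * c - 1) ≤ 8 * c ^ 3 + 1 := by
        calc c * (c + 1) * (2 * c - 1) ≤ c * (c + 1) * (2 * c) :=
              Nat.mul_le_mul_left _ (Nat.sub_le _ _)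
          _ = 2 * c ^ 3 + 2 * c ^ 2 := by ring
          _ ≤ 8 * c ^ 3 + 1 := by nlinarith [Nat.one_le_iff_ne_zero.2 (by omega : c ≠ 0)]
      calc c * (c + 1) * ((2 * c - 1) * a) = (c * (c + 1) * (2 * c - 1)) * a := by ring
        _ ≤ (8 * c ^ 3 + 1) * a := Nat.mul_le_mul_right a this
    omega
  -- the family of all small-cut sets
  set 𝒮 : Finset (Finset V) := Finset.univ.filter fun S : Finset V => cutEdges G S ≤ a with h𝒮
  have hF : ∀ S ∈ 𝒮, cutEdges G S ≤ a := fun S hS => (Finset.mem_filter.1 hS).2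
  have hclassesEq : cutClasses G a = classesF 𝒮 := by
    rw [h𝒮, ← cutClasses_eq]
  obtain ⟨hcount, hsizes⟩ := key G hc hcard hdeg hnum 𝒮 hF
  rw [hclassesEq]
  refine ⟨hsizes, hcount, ?_, ?_⟩
  · intro U hU U' hU' hne
    exact crossEdges_classes_le G hF hU hU' hne
  · -- part (iv)
    set 𝒮' : Finset (Finset V) := Finset.univ.filter fun S : Finset V =>
      S ≠ ∅ ∧ S ≠ Finset.univ ∧ cutEdges G S ≤ a with h𝒮'
    have hmem𝒮' : ∀ {S : Finset V}, S ∈ 𝒮' ↔ S ≠ ∅ ∧ S ≠ Finset.univ ∧ cutEdges G S ≤ a := by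
      intro S; simp [h𝒮']
    -- injection into powerset of classes
    have hcard𝒮' : 𝒮'.card ≤ 2 ^ c := by
      have hkey : ∀ S ∈ 𝒮', ∀ v : V, v ∈ S ↔ classF 𝒮 v ∈ (classesF 𝒮).filter (· ⊆ S) := by
        intro S hS v
        have hScut : cutEdges G S ≤ a := (hmem𝒮'.1 hS).2.2
        rw [Finset.mem_filter]
        constructor
        · intro hv
          refine ⟨classF_mem_classesF 𝒮 v, fun u hu => ?_⟩
          have := (mem_classF.1 hu) S (by simp [h𝒮, hScut])
          exact this.2 hv
        · intro h
          exact h.2 (self_mem_classF v)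
      have hinj : Set.InjOn (fun S => (classesF 𝒮).filter (· ⊆ S)) ↑𝒮' := by
        intro S hS S' hS' heq
        simp only at heq
        ext v
        rw [hkey S (Finset.mem_coe.1 hS) v, hkey S' (Finset.mem_coe.1 hS') v, heq]
      calc 𝒮'.card ≤ ((classesF 𝒮).powerset).card :=
            Finset.card_le_card_of_injOn _
              (fun S _ => Finset.mem_powerset.2 (Finset.filter_subset _ _)) hinj
        _ = 2 ^ (classesF 𝒮).card := Finset.card_powerset _
        _ ≤ 2 ^ c := Nat.pow_le_pow_right (by norm_num) hcount
    -- fibers of the pairing map have size ≥ 2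
    set g : Finset V → Finset (Finset V) := fun S => ({S, Sᶜ} : Finset (Finset V)) with hg
    have hsum : 𝒮'.card = ∑ p ∈ 𝒮'.image g, (𝒮'.filter fun S => g S = p).card :=
      Finset.card_eq_sum_card_fiberwise fun S hS => Finset.mem_image_of_mem g hS
    have hfib : ∀ p ∈ 𝒮'.image g, 2 ≤ (𝒮'.filter fun S => g S = p).card := by
      intro p hp
      obtain ⟨S₀, hS₀, rfl⟩ := Finset.mem_image.1 hp
      obtain ⟨h1, h2, h3⟩ := hmem𝒮'.1 hS₀
      have hne : S₀ ≠ S₀ᶜ := by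
        obtain ⟨v, hv⟩ := Finset.nonempty_iff_ne_empty.2 h1
        intro h
        exact (Finset.mem_compl.1 (h ▸ hv)) hv
      have hcS₀ : S₀ᶜ ∈ 𝒮' := by
        refine hmem𝒮'.2 ⟨?_, ?_, (cutEdges_compl G S₀).le.trans h3⟩
        · intro h; exact h2 (by rw [← compl_compl S₀, h, Finset.compl_empty])
        · intro h; exact h1 (by rw [← compl_compl S₀, h, Finset.compl_univ])
      have hgc : g S₀ᶜ = g S₀ := by
        rw [hg]; simp only [compl_compl]; exact Finset.pair_comm _ _
      have hsub : ({S₀, S₀ᶜ} : Finset (Finset V)) ⊆ 𝒮'.filter fun S => g S = g S₀ := by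
        intro S hS
        rcases Finset.mem_insert.1 hS with rfl | hS
        · exact Finset.mem_filter.2 ⟨hS₀, rfl⟩
        · rw [Finset.mem_singleton.1 hS]
          exact Finset.mem_filter.2 ⟨hcS₀, hgc⟩
      calc 2 = ({S₀, S₀ᶜ} : Finset (Finset V)).card := (Finset.card_pair hne).symm
        _ ≤ _ := Finset.card_le_card hsub
    have h2img : 2 * (𝒮'.image g).card ≤ 2 ^ c := by
      calc 2 * (𝒮'.image g).card = ∑ _p ∈ 𝒮'.image g, 2 := by
            rw [Finset.sum_const, smul_eq_mul, mul_comm]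
        _ ≤ ∑ p ∈ 𝒮'.image g, (𝒮'.filter fun S => g S = p).card := Finset.sum_le_sum hfib
        _ = 𝒮'.card := hsum.symm
        _ ≤ 2 ^ c := hcard𝒮'
    have hpow : 2 ^ c = 2 * 2 ^ (c - 1) := by
      conv_lhs => rw [show c = (c - 1) + 1 by omega]
      rw [pow_succ]
      ring
    omega
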